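/- Approximate first welfare theorem: Let N, M be finite, let each v_i : 2^M → ℝ≥0 be a monotone valuation, let p : M → ℝ≥0 be a price vector, and let 0 < μ ≤ 1. Suppose the full allocation (S_i)_{i∈N} and p form a μ-biased Walrasian equilibrium: there exists μ' ∈ [μ, 1] such that for every allocation (T_i) and every player i, (μ'/μ)·v_i(S_i) − p(S_i) ≥ μ'·v_i(T_i) − p(T_i). Then Σ_i v_i(S_i) ≥ μ·OPT, where OPT is the maximum of Σ_i v_i(T_i) over all allocations (T_i). -/

import Mathlib

/-- Approximate first welfare theorem.  Let `(S_i)` be a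
full allocation and `p` a price vector forming a `μ`-biased Walrasian
equilibrium: there is `μ' ∈ [μ, 1]` such that for every allocation `(T_i)` and
every player `i`, `(μ'/μ)·v_i(S_i) − p(S_i) ≥ μ'·v_i(T_i) − p(T_i)`.  Then the
welfare `Σ_i v_i(S_i)` is at least `μ` times the welfare of every allocation. -/
theorem approximate_first_welfare_theorem
    {N M : Type*} [Fintype N] [Fintype M] [DecidableEq M]
    (μ : ℝ) (hμ0 : 0 < μ) (hμ1 : μ ≤ 1)
    (v : N → Finset M → ℝ)
    (hv : ∀ (i : N) (S : Finset M), 0 ≤ v i S)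
    (hmono : ∀ (i : N) (S T : Finset M), S ⊆ T → v i S ≤ v i T)
    (p : M → ℝ) (hp : ∀ j : M, 0 ≤ p j)
    (S : N → Finset M)
    (hdisj : ∀ i i' : N, i ≠ i' → Disjoint (S i) (S i'))
    (hfull : ∀ j : M, ∃ i : N, j ∈ S i)
    (hbiased : ∃ μ' : ℝ, μ ≤ μ' ∧ μ' ≤ 1 ∧
      ∀ T : N → Finset M, (∀ i i' : N, i ≠ i' → Disjoint (T i) (T i')) →
        ∀ i : N, (μ' / μ) * v i (S i) - (∑ j ∈ S i, p j) ≥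
          μ' * v i (T i) - (∑ j ∈ T i, p j)) :
    ∀ T : N → Finset M, (∀ i i' : N, i ≠ i' → Disjoint (T i) (T i')) →
      ∑ i : N, v i (S i) ≥ μ * ∑ i : N, v i (T i) := by
  obtain ⟨μ', hμμ', hμ'1, h⟩ := hbiased
  intro T hT
  have hμ' : 0 < μ' := lt_of_lt_of_le hμ0 hμμ'
  have hS : ∑ i : N, ∑ j ∈ S i, p j = ∑ j : M, p j := by
    rw [← Finset.sum_biUnion (fun a _ b _ hab => hdisj a b hab)]
    apply Finset.sum_congr _ (fun _ _ => rfl)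
    ext j
    simpa using hfull j
  have hTle : ∑ i : N, ∑ j ∈ T i, p j ≤ ∑ j : M, p j := by
    rw [← Finset.sum_biUnion (fun a _ b _ hab => hT a b hab)]
    exact Finset.sum_le_sum_of_subset_of_nonneg (Finset.subset_univ _)
      (fun j _ _ => hp j)
  have key : μ' / μ * ∑ i : N, v i (S i) - ∑ i : N, ∑ j ∈ S i, p j ≥
      μ' * ∑ i : N, v i (T i) - ∑ i : N, ∑ j ∈ T i, p j := by
    have := Finset.sum_le_sum (fun i (_ : i ∈ Finset.univ) => h T hT i)
    simpa [Finset.sum_sub_distrib, Finset.mul_sum] using this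
  have key2 : μ' / μ * ∑ i : N, v i (S i) ≥ μ' * ∑ i : N, v i (T i) := by
    linarith [hS, hTle, key]
  have hc : μ' / μ * μ = μ' := div_mul_cancel₀ _ hμ0.ne'
  have hcpos : 0 < μ' / μ := div_pos hμ' hμ0
  have hfin : μ' / μ * (μ * ∑ i : N, v i (T i)) ≤ μ' / μ * ∑ i : N, v i (S i) := by
    rw [← mul_assoc, hc]; exact key2
  exact le_of_mul_le_mul_left hfin hcpos
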